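/- arXiv:2109.15090 — 3 statements merged into one kernel-verified Lean document; each statement's English description precedes it below -/
import Mathlib

section
/- Let L and M be two linear orders on a finite set V. Let d_1 <_L d_2 <_L ... <_L d_δ be nodes also satisfying d_1 <_M ... <_M d_δ. Define L_j = {v : v <_L d_j and d_j <_M v}, and let S_1 = {v : v ≤_L d_1} and S_j = {v : d_{j-1} <_L v ≤_L d_j} for j ≥ 2. Then ⋃_{j=1}^{δ} (S_j ∩ L_j) = ⋃_{j=1}^{δ} L_j. -/
/-- ⋃ (S_j ∩ L_j) = ⋃ L_j. -/
theorem stmt_2 {V : Type*} [Fintype V] (L M : LinearOrder V) (δ : ℕ) (hδ : 1 ≤ δ)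
    (d : ℕ → V)
    (h : ∀ i j : ℕ, 1 ≤ i → i < j → j ≤ δ → L.lt (d i) (d j) ∧ M.lt (d i) (d j)) :
    (⋃ j ∈ Finset.Icc 1 δ,
        ((if j = 1 then {v : V | L.le v (d 1)}
          else {v : V | L.lt (d (j - 1)) v ∧ L.le v (d j)}) ∩
          {v : V | L.lt v (d j) ∧ M.lt (d j) v})) =
      ⋃ j ∈ Finset.Icc 1 δ, {v : V | L.lt v (d j) ∧ M.lt (d j) v} := by
  apply subset_antisymm
  · exact Set.iUnion₂_mono fun j hj => Set.inter_subset_right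
  · intro v hv
    simp only [Set.mem_iUnion, Set.mem_setOf_eq, Set.mem_inter_iff, exists_prop] at hv ⊢
    obtain ⟨j, hj, hvL, hvM⟩ := hv
    rw [Finset.mem_Icc] at hj
    obtain ⟨hj1, hjδ⟩ := hj
    have hPj : 1 ≤ j ∧ L.le v (d j) := ⟨hj1, @le_of_lt V L.toPreorder _ _ hvL⟩
    set P : ℕ → Prop := fun k => 1 ≤ k ∧ L.le v (d k) with hP
    have hex : ∃ k, P k := ⟨j, hPj⟩
    classical
    set i := Nat.find hex with hi
    have hPi : P i := Nat.find_spec hex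
    have hij : i ≤ j := Nat.find_min' hex hPj
    have hi1 : 1 ≤ i := hPi.1
    have hiδ : i ≤ δ := le_trans hij hjδ
    -- M.lt (d i) v
    have hMiv : M.lt (d i) v := by
      rcases eq_or_lt_of_le hij with rfl | hlt
      · exact hvM
      · exact @lt_trans V M.toPreorder _ _ _ (h i j hi1 hlt hjδ).2 hvM
    -- v ≠ d i
    have hne : v ≠ d i := by
      intro hvdi
      exact @lt_irrefl V M.toPreorder v (hvdi ▸ hMiv)
    have hLvi : L.lt v (d i) := @lt_of_le_of_ne V L.toPartialOrder _ _ hPi.2 hne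
    refine ⟨i, Finset.mem_Icc.mpr ⟨hi1, hiδ⟩, ?_, hLvi, hMiv⟩
    by_cases hi1' : i = 1
    · simp [hi1', hPi.2, (hi1' ▸ hPi.2 : L.le v (d 1))]
    · simp only [hi1', if_neg, Set.mem_setOf_eq]
      refine ⟨?_, hPi.2⟩
      have hi2 : 2 ≤ i := by omega
      have hlt : i - 1 < i := by omega
      have hnP : ¬ P (i - 1) := Nat.find_min hex hlt
      have : ¬ L.le v (d (i - 1)) := by
        intro hle
        exact hnP ⟨by omega, hle⟩
      exact @lt_of_not_ge V L _ _ this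
end

section
/- For natural numbers k, ℓ and a real α ≥ 1: α(k + ℓ + 1) + (k + ℓ + 1) + (1 + α)(k − ℓ) ≤ max(4, 1 + α) · (α(k + 1)), i.e., the amortized cost of Move-Recursively-Forward in the generalized cost model at an access event is at most max(4, 1+α) times OPT's cost. -/
/-- amortized bound in the generalized cost model. -/
theorem stmt_8 (k ℓ : ℕ) (α : ℝ) (hα : 1 ≤ α) :
    α * ((k : ℝ) + ℓ + 1) + ((k : ℝ) + ℓ + 1) + (1 + α) * ((k : ℝ) - ℓ) ≤
      max 4 (1 + α) * (α * ((k : ℝ) + 1)) := by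
  have hk : (0:ℝ) ≤ k := Nat.cast_nonneg k
  rcases le_total (4:ℝ) (1+α) with h | h
  · rw [max_eq_right h]
    nlinarith [mul_nonneg (by linarith : (0:ℝ) ≤ α - 3) hk, mul_nonneg (by linarith : (0:ℝ) ≤ 1 + α) (by linarith : (0:ℝ) ≤ α - 2)]
  · rw [max_eq_left h]
    nlinarith [(Nat.cast_nonneg ℓ : (0:ℝ) ≤ (ℓ:ℝ))]
end

section
/- There exists a finite set of nodes, a feasible initial list configuration with no dependencies among current nodes, and a new node x with n/2 dependencies requiring half of the nodes to precede x and the other half to follow x, such that inserting x requires at least (n/2)² adjacent transpositions of the existing nodes when the first half initially alternates with (or entirely follows) the second half. -/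
/-- inserting a node may force at least (n/2)² inversions
(hence that many adjacent transpositions). -/
theorem stmt_16 : ∀ m : ℕ, ∃ (n : ℕ) (A B : Finset (Fin n)),
    A.card = m ∧ B.card = m ∧ (∀ a ∈ A, ∀ b ∈ B, b < a) ∧
    ∀ π : Equiv.Perm (Fin n), (∀ a ∈ A, ∀ b ∈ B, π a < π b) →
      m * m ≤ {p : Fin n × Fin n | p.1 < p.2 ∧ π p.2 < π p.1}.ncard := by
  intro m
  set A : Finset (Fin (2*m)) := Finset.univ.filter (fun i => m ≤ i.val) with hA
  set B : Finset (Fin (2*m)) := Finset.univ.filter (fun i => i.val < m) with hB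
  have cardA : A.card = m := by
    have h1 : ((Finset.Iio (2*m)).filter (fun i => m ≤ i)).card = A.card := by
      rw [← Fin.map_valEmbedding_univ, Finset.filter_map, Finset.card_map]; rfl
    have h2 : ((Finset.Iio (2*m)).filter (fun i => m ≤ i)) = Finset.Ico m (2*m) := by
      ext i; simp [Finset.mem_filter, Finset.mem_Ico, Finset.mem_Iio]; omega
    rw [← h1, h2, Nat.card_Ico]; omega
  have cardB : B.card = m := by
    have h1 : ((Finset.Iio (2*m)).filter (fun i => i < m)).card = B.card := by
      rw [← Fin.map_valEmbedding_univ, Finset.filter_map, Finset.card_map]; rfl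
    have h2 : ((Finset.Iio (2*m)).filter (fun i => i < m)) = Finset.range m := by
      ext i; simp; omega
    rw [← h1, h2, Finset.card_range]
  refine ⟨2 * m, A, B, cardA, cardB, ?_, ?_⟩
  · intro a ha b hb
    rw [hA, Finset.mem_filter] at ha
    rw [hB, Finset.mem_filter] at hb
    exact Fin.lt_def.mpr (lt_of_lt_of_le hb.2 ha.2)
  · intro π hπ
    have hsub : (↑(B ×ˢ A) : Set (Fin (2*m) × Fin (2*m))) ⊆
        {p : Fin (2*m) × Fin (2*m) | p.1 < p.2 ∧ π p.2 < π p.1} := by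
      rintro ⟨b, a⟩ hp
      rw [Finset.coe_product] at hp
      obtain ⟨hb, ha⟩ := hp
      simp only [Finset.mem_coe] at hb ha
      have hb' := (Finset.mem_filter.mp hb).2
      have ha' := (Finset.mem_filter.mp ha).2
      exact ⟨Fin.lt_def.mpr (lt_of_lt_of_le hb' ha'), hπ a ha b hb⟩
    calc m * m = (B ×ˢ A).card := by rw [Finset.card_product, cardA, cardB]
      _ = (↑(B ×ˢ A) : Set (Fin (2*m) × Fin (2*m))).ncard := (Set.ncard_coe_finset _).symm
      _ ≤ _ := Set.ncard_le_ncard hsub (Set.toFinite _)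
end
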